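/- Let A be a finite-dimensional algebra over a field F with an anisotropic multiplicative norm N of degree n (i.e. N(xy)=N(x)N(y) for all x,y, and N(x)=0 implies x=0). Let c ∈ A be nonzero and let f, g be similarities of N with similarity factors α, β (i.e. N(f(x))=αN(x), N(g(x))=βN(x)). Define x∘y = xy − c(f(x)g(y)). If N(c) ≠ 1/(αβ), then (A,∘) has no zero divisors, i.e. is a division algebra. -/
import Mathlib


/-- Albert-type twist `x∘y = xy − c(f(x)g(y))` of a finite-dimensional algebra with
anisotropic multiplicative norm: if `N(c) ≠ 1/(αβ)` then `(A,∘)` has no zero divisors. -/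
theorem stmt_0 (F : Type*) [Field F] (A : Type*) [AddCommGroup A] [Module F A]
    [FiniteDimensional F A]
    (mul : A →ₗ[F] A →ₗ[F] A) (N : A → F)
    (hNmul : ∀ x y : A, N (mul x y) = N x * N y)
    (hNaniso : ∀ x : A, N x = 0 → x = 0)
    (c : A) (hc : c ≠ 0)
    (f g : A →ₗ[F] A) (α β : F) (hα : α ≠ 0) (hβ : β ≠ 0)
    (hf : ∀ x : A, N (f x) = α * N x) (hg : ∀ x : A, N (g x) = β * N x)
    (hNc : N c ≠ (α * β)⁻¹) :
    ∀ x y : A, mul x y - mul c (mul (f x) (g y)) = 0 → x = 0 ∨ y = 0 := by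
  intro x y h
  by_contra hxy
  push_neg at hxy
  obtain ⟨hx, hy⟩ := hxy
  have hNx : N x ≠ 0 := fun h0 => hx (hNaniso x h0)
  have hNy : N y ≠ 0 := fun h0 => hy (hNaniso y h0)
  have heq : mul x y = mul c (mul (f x) (g y)) := by
    have := sub_eq_zero.mp h
    exact this
  have hN : N x * N y = N c * (α * N x * (β * N y)) := by
    have := congrArg N heq
    rwa [hNmul, hNmul, hNmul, hf, hg] at this
  apply hNc
  have h1 : (N x * N y) * (N c * (α * β)) = (N x * N y) * 1 := by linear_combination -hN
  have key := mul_left_cancel₀ (mul_ne_zero hNx hNy) h1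
  field_simp
  linear_combination key
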